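/- Let ℓ > 0, n ∈ ℤ and 0 < r < π/ℓ. Then (1/(2πi)) ∮_{|k − nπ/ℓ| = r} (1/(k sin²(kℓ))) dk equals −1/(n²π²) if n ≠ 0, and equals 1/3 if n = 0, where the circle is traversed once counterclockwise. -/

import Mathlib

open Real

section Aux

open Filter Topology Metric Complex


lemma sin_taylor_bound' {z : ℂ} (hz : ‖z‖ ≤ 1) :
    ‖Complex.sin z - (z - z ^ 3 / 6)‖ ≤ ‖z‖ ^ 5 * (1 / 25) := by
  have hzI : ‖z * I‖ ≤ 1 := by simpa using hz
  have hzI' : ‖-z * I‖ ≤ 1 := by simpa using hz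
  have h1 := Complex.exp_bound hzI' (by norm_num : 0 < 5)
  have h2 := Complex.exp_bound hzI (by norm_num : 0 < 5)
  have hsin : Complex.sin z - (z - z ^ 3 / 6)
      = ((Complex.exp (-z * I) - ∑ i ∈ Finset.range 5, (-z * I) ^ i / i.factorial)
        - (Complex.exp (z * I) - ∑ i ∈ Finset.range 5, (z * I) ^ i / i.factorial)) * I / 2 := by
    rw [Complex.sin]
    simp [Finset.sum_range_succ, Nat.factorial]
    ring_nf
    rw [show (I:ℂ)^2 = -1 from Complex.I_sq, show (I:ℂ)^4 = 1 from by
      rw [show 4 = 2*2 from rfl, pow_mul, Complex.I_sq]; norm_num]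
    ring
  rw [hsin, norm_div, norm_mul, Complex.norm_I, Complex.norm_two, mul_one]
  have h3 : ‖(Complex.exp (-z * I) - ∑ i ∈ Finset.range 5, (-z * I) ^ i / i.factorial)
        - (Complex.exp (z * I) - ∑ i ∈ Finset.range 5, (z * I) ^ i / i.factorial)‖
      ≤ ‖z‖ ^ 5 * (1/50) := by
    refine (norm_sub_le _ _).trans ?_
    have e1 : ‖-z * I‖ = ‖z‖ := by simp
    have e2 : ‖z * I‖ = ‖z‖ := by simp
    rw [e1] at h1; rw [e2] at h2
    calc _ ≤ ‖z‖ ^ 5 * (↑(Nat.succ 5) * (↑(Nat.factorial 5) * (5:ℝ))⁻¹)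
            + ‖z‖ ^ 5 * (↑(Nat.succ 5) * (↑(Nat.factorial 5) * (5:ℝ))⁻¹) := by
          exact add_le_add h1 h2
      _ = ‖z‖ ^ 5 * (1/50) := by norm_num [Nat.factorial]; ring
  nlinarith [pow_nonneg (norm_nonneg z) 5]

lemma cos_taylor_bound' {z : ℂ} (hz : ‖z‖ ≤ 1) :
    ‖Complex.cos z - (1 - z ^ 2 / 2)‖ ≤ ‖z‖ ^ 4 * (1 / 9) := by
  have hzI : ‖z * I‖ ≤ 1 := by simpa using hz
  have hzI' : ‖-z * I‖ ≤ 1 := by simpa using hz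
  have h1 := Complex.exp_bound hzI' (by norm_num : 0 < 4)
  have h2 := Complex.exp_bound hzI (by norm_num : 0 < 4)
  have hcos : Complex.cos z - (1 - z ^ 2 / 2)
      = ((Complex.exp (z * I) - ∑ i ∈ Finset.range 4, (z * I) ^ i / i.factorial)
        + (Complex.exp (-z * I) - ∑ i ∈ Finset.range 4, (-z * I) ^ i / i.factorial)) / 2 := by
    rw [Complex.cos]
    simp [Finset.sum_range_succ, Nat.factorial]
    ring_nf
    rw [show (I:ℂ)^2 = -1 from Complex.I_sq]
    ring
  rw [hcos, norm_div, Complex.norm_two]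
  have h3 : ‖(Complex.exp (z * I) - ∑ i ∈ Finset.range 4, (z * I) ^ i / i.factorial)
        + (Complex.exp (-z * I) - ∑ i ∈ Finset.range 4, (-z * I) ^ i / i.factorial)‖
      ≤ ‖z‖ ^ 4 * (2/9) := by
    refine (norm_add_le _ _).trans ?_
    have e1 : ‖-z * I‖ = ‖z‖ := by simp
    have e2 : ‖z * I‖ = ‖z‖ := by simp
    rw [e1] at h1; rw [e2] at h2
    calc _ ≤ ‖z‖ ^ 4 * (↑(Nat.succ 4) * (↑(Nat.factorial 4) * (4:ℝ))⁻¹)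
            + ‖z‖ ^ 4 * (↑(Nat.succ 4) * (↑(Nat.factorial 4) * (4:ℝ))⁻¹) := by
          exact add_le_add h2 h1
      _ ≤ ‖z‖ ^ 4 * (2/9) := by
          norm_num [Nat.factorial]
          nlinarith [pow_nonneg (norm_nonneg z) 4]
  nlinarith [pow_nonneg (norm_nonneg z) 4]


-- cubic limit
lemma aux_cubic' : Tendsto (fun z : ℂ => (z * Complex.cos z - Complex.sin z) / z ^ 3)
    (𝓝[≠] (0:ℂ)) (𝓝 (-(1/3) : ℂ)) := by
  have key : ∀ z : ℂ, z ≠ 0 → ‖z‖ ≤ 1 →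
      ‖(z * Complex.cos z - Complex.sin z) / z ^ 3 - (-(1/3))‖ ≤ ‖z‖ * 1 := by
    intro z hz h1
    have hrw : (z * Complex.cos z - Complex.sin z) / z ^ 3 - (-(1/3))
        = (z * (Complex.cos z - (1 - z^2/2)) - (Complex.sin z - (z - z^3/6))) / z ^ 3 := by
      field_simp
      ring
    rw [hrw, norm_div]
    have hza := norm_nonneg z
    have hnum : ‖z * (Complex.cos z - (1 - z^2/2)) - (Complex.sin z - (z - z^3/6))‖
        ≤ ‖z‖ ^ 5 := by
      refine (norm_sub_le _ _).trans ?_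
      rw [norm_mul]
      have h2 : ‖z‖ * ‖Complex.cos z - (1 - z^2/2)‖
          ≤ ‖z‖ * (‖z‖ ^ 4 * (1/9)) :=
        mul_le_mul_of_nonneg_left (cos_taylor_bound' h1) hza
      have h3 := sin_taylor_bound' h1
      have h4 : ‖z‖ ^ 5 = ‖z‖ * ‖z‖ ^ 4 := by ring
      nlinarith [pow_nonneg hza 4, pow_nonneg hza 5]
    have hz3 : 0 < ‖z‖ ^ 3 := pow_pos (norm_pos_iff.mpr hz) 3
    calc ‖_‖ / ‖z ^ 3‖ ≤ ‖z‖ ^ 5 / ‖z‖ ^ 3 := by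
          rw [norm_pow]; gcongr
      _ = ‖z‖ ^ 2 := by field_simp
      _ ≤ ‖z‖ * 1 := by nlinarith
  have h0 : Tendsto (fun z : ℂ => (z * Complex.cos z - Complex.sin z) / z ^ 3 - (-(1/3)))
      (𝓝[≠] (0:ℂ)) (𝓝 0) := by
    refine squeeze_zero_norm' (a := fun z : ℂ => ‖z‖ * 1) ?_ ?_
    · have hev : ∀ᶠ z in 𝓝[≠] (0:ℂ), ‖z‖ ≤ 1 := by
        refine Filter.Eventually.filter_mono nhdsWithin_le_nhds ?_
        filter_upwards [Metric.closedBall_mem_nhds (0:ℂ) one_pos] with z hz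
        simpa [Complex.dist_eq] using hz
      filter_upwards [hev, self_mem_nhdsWithin] with z h1 hz using key z hz h1
    · simp only [mul_one]
      have : Tendsto (fun z : ℂ => ‖z‖) (𝓝 0) (𝓝 0) := by
        simpa using continuous_norm.tendsto (0:ℂ)
      exact this.mono_left nhdsWithin_le_nhds
  have := h0.add (tendsto_const_nhds (x := (-(1/3) : ℂ)))
  simpa using this


lemma aux_sin_div : Tendsto (fun w : ℂ => w / Complex.sin w) (𝓝[≠] (0:ℂ)) (𝓝 1) := by
  have hslope := hasDerivAt_iff_tendsto_slope.mp (Complex.hasDerivAt_sin 0)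
  rw [Complex.cos_zero] at hslope
  have h1 : Tendsto (fun w : ℂ => Complex.sin w / w) (𝓝[≠] (0:ℂ)) (𝓝 1) :=
    hslope.congr (fun w => by simp [slope_def_field])
  have h2 := h1.inv₀ one_ne_zero
  simp only [inv_one] at h2
  refine h2.congr (fun w => ?_)
  rw [inv_div]

set_option maxHeartbeats 2000000 in
/-- `(1/(2πi)) ∮_{|k − nπ/ℓ| = r} dk/(k sin²(kℓ))` equals `−1/(n²π²)` if
`n ≠ 0` and `1/3` if `n = 0`, for `0 < r < π/ℓ`. -/
theorem circleIntegral_one_div_k_sin_sq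
    (ℓ : ℝ) (hℓ : 0 < ℓ) (n : ℤ) (r : ℝ) (hr : 0 < r) (hr' : r < π / ℓ) :
    (1 / (2 * (π : ℂ) * Complex.I)) *
        (∮ k in C((((n : ℝ) * π / ℓ : ℝ) : ℂ), r), 1 / (k * Complex.sin (k * ℓ) ^ 2))
      = if n = 0 then 1 / 3 else -(1 / ((n : ℂ) ^ 2 * (π : ℂ) ^ 2)) := by
  have hπ : (0:ℝ) < π := Real.pi_pos
  have hl : (ℓ:ℂ) ≠ 0 := Complex.ofReal_ne_zero.2 hℓ.ne'
  have hπc : (π:ℂ) ≠ 0 := Complex.ofReal_ne_zero.2 hπ.ne'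
  have hπℓ : 0 < π / ℓ := div_pos hπ hℓ
  set c₀ : ℂ := (((n : ℝ) * π / ℓ : ℝ) : ℂ) with hc₀def
  have hc₀ℓ : c₀ * (ℓ:ℂ) = (n:ℂ) * (π:ℂ) := by
    rw [hc₀def]; push_cast; field_simp
  have hsin0 : Complex.sin (c₀ * ℓ) = 0 := by
    rw [hc₀ℓ]; exact Complex.sin_eq_zero_iff.2 ⟨n, rfl⟩
  have hcos0 : Complex.cos (c₀ * ℓ) ≠ 0 := by
    intro h
    have h2 := Complex.sin_sq_add_cos_sq (c₀ * ℓ)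
    rw [hsin0, h] at h2; simp at h2
  -- point facts
  have hpt : ∀ k : ℂ, dist k c₀ < π / ℓ → k ≠ c₀ → Complex.sin (k * ℓ) ≠ 0 ∧ k ≠ 0 := by
    intro k hk hne
    constructor
    · intro hs
      obtain ⟨m, hm⟩ := Complex.sin_eq_zero_iff.1 hs
      have hkm : k = (((m:ℝ) * π / ℓ : ℝ) : ℂ) := by
        push_cast
        field_simp
        exact hm
      by_cases hmn : m = n
      · exact hne (by rw [hkm, hmn, hc₀def])
      · have hd : dist k c₀ = |((m - n : ℤ) : ℝ)| * (π / ℓ) := by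
          rw [hkm, hc₀def, Complex.dist_eq]
          have he : (((m:ℝ) * π / ℓ : ℝ) : ℂ) - (((n:ℝ) * π / ℓ : ℝ) : ℂ)
              = ((((m - n : ℤ):ℝ) * (π / ℓ) : ℝ) : ℂ) := by push_cast; ring
          rw [he, Complex.norm_real, Real.norm_eq_abs, abs_mul, abs_of_pos hπℓ]
        have h1 : (1:ℝ) ≤ |((m - n : ℤ) : ℝ)| := by
          rw [← Int.cast_abs]
          exact_mod_cast Int.one_le_abs (sub_ne_zero.2 hmn)
        rw [hd] at hk
        nlinarith
    · intro hk0
      by_cases hn0 : n = 0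
      · exact hne (by rw [hk0, hc₀def, hn0]; simp)
      · have hd : dist k c₀ = |(n:ℝ)| * (π/ℓ) := by
          rw [hk0, hc₀def, Complex.dist_eq]
          have he : (0:ℂ) - (((n:ℝ) * π / ℓ : ℝ) : ℂ) = ((-((n:ℝ) * (π / ℓ)) : ℝ) : ℂ) := by
            push_cast; ring
          rw [he, Complex.norm_real, Real.norm_eq_abs, abs_neg, abs_mul, abs_of_pos hπℓ]
        have h1 : (1:ℝ) ≤ |(n:ℝ)| := by
          rw [← Int.cast_abs]; exact_mod_cast Int.one_le_abs hn0
        rw [hd] at hk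
        nlinarith
  set r' : ℝ := (r + π/ℓ)/2 with hr'def
  have hr'1 : r < r' := by rw [hr'def]; linarith
  have hr'2 : r' < π/ℓ := by rw [hr'def]; linarith
  have hr'0 : 0 < r' := by linarith
  have hsph : ∀ k ∈ sphere c₀ r, Complex.sin (k*ℓ) ≠ 0 ∧ k ≠ 0 ∧ k ≠ c₀ := by
    intro k hk
    have hd : dist k c₀ = r := mem_sphere.mp hk
    have hne : k ≠ c₀ := by
      intro h; rw [h] at hd; simp at hd; exact hr.ne' hd.symm
    obtain ⟨h1, h2⟩ := hpt k (by rw [hd]; exact hr') hne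
    exact ⟨h1, h2, hne⟩
  set f : ℂ → ℂ := fun k => 1 / (k * Complex.sin (k * ℓ) ^ 2) with hfdef
  set Gp : ℂ → ℂ := fun k => Complex.cos (k*ℓ) / Complex.sin (k*ℓ) / ((ℓ:ℂ) * k^2) with hGpdef
  set F : ℂ → ℂ := fun k => -(ℓ:ℂ)⁻¹ * (Complex.cos (k*ℓ) / (Complex.sin (k*ℓ) * k)) with hFdef
  have hF : ∀ k : ℂ, Complex.sin (k*ℓ) ≠ 0 → k ≠ 0 → HasDerivAt F (f k + Gp k) k := by
    intro k hs hk
    have hsin : HasDerivAt (fun k : ℂ => Complex.sin (k*ℓ)) (Complex.cos (k*ℓ) * ℓ) k := by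
      have := (Complex.hasDerivAt_sin (k*ℓ)).comp k ((hasDerivAt_id k).mul_const (ℓ:ℂ))
      simpa [Function.comp_def] using this
    have hcos : HasDerivAt (fun k : ℂ => Complex.cos (k*ℓ)) (-Complex.sin (k*ℓ) * ℓ) k := by
      have := (Complex.hasDerivAt_cos (k*ℓ)).comp k ((hasDerivAt_id k).mul_const (ℓ:ℂ))
      simpa [Function.comp_def] using this
    have hden : HasDerivAt (fun k : ℂ => Complex.sin (k*ℓ) * k)
        (Complex.cos (k*ℓ) * ℓ * k + Complex.sin (k*ℓ)) k := by
      simpa [Pi.mul_def] using hsin.mul (hasDerivAt_id k)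
    have hdiv := (hcos.div hden (mul_ne_zero hs hk)).const_mul (-(ℓ:ℂ)⁻¹)
    refine hdiv.congr_deriv (Eq.symm ?_)
    rw [hfdef, hGpdef]
    have hpy : Complex.cos (k*ℓ)^2 = 1 - Complex.sin (k*ℓ)^2 := by
      linear_combination Complex.sin_sq_add_cos_sq (k*ℓ)
    field_simp
    ring_nf
    linear_combination (-(k*(ℓ:ℂ))) * Complex.sin_sq_add_cos_sq (k*ℓ)
  -- continuity on the sphere
  have hcont_f : ContinuousOn f (sphere c₀ r) := by
    intro k hk
    obtain ⟨h1, h2, _⟩ := hsph k hk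
    have hc1 : ContinuousAt (fun k : ℂ => k * Complex.sin (k * (ℓ:ℂ)) ^ 2) k := by fun_prop
    exact (continuousAt_const.div hc1 (mul_ne_zero h2 (pow_ne_zero 2 h1))).continuousWithinAt
  have hcont_Gp : ContinuousOn Gp (sphere c₀ r) := by
    intro k hk
    obtain ⟨h1, h2, _⟩ := hsph k hk
    have hca : ContinuousAt (fun k : ℂ => Complex.cos (k*(ℓ:ℂ))) k := by fun_prop
    have hcb : ContinuousAt (fun k : ℂ => Complex.sin (k*(ℓ:ℂ))) k := by fun_prop
    have hcc : ContinuousAt (fun k : ℂ => (ℓ:ℂ) * k^2) k := by fun_prop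
    exact ((hca.div hcb h1).div hcc (mul_ne_zero hl (pow_ne_zero 2 h2))).continuousWithinAt
  have hIzero : (∮ k in C(c₀, r), (f k + Gp k)) = 0 :=
    circleIntegral.integral_eq_zero_of_hasDerivWithinAt hr.le
      (fun z hz => (hF z (hsph z hz).1 (hsph z hz).2.1).hasDerivWithinAt)
  have hsplit : (∮ k in C(c₀, r), f k) = - (∮ k in C(c₀, r), Gp k) := by
    have h1 : (∮ k in C(c₀, r), ((f k + Gp k) - Gp k))
        = (∮ k in C(c₀, r), (f k + Gp k)) - (∮ k in C(c₀, r), Gp k) :=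
      circleIntegral.integral_sub ((hcont_f.add hcont_Gp).circleIntegrable hr.le)
        (hcont_Gp.circleIntegrable hr.le)
    simp only [add_sub_cancel_right] at h1
    rw [h1, hIzero, zero_sub]
  by_cases hn : n = 0
  · -- n = 0
    rw [if_pos hn]
    subst hn
    have hc00 : c₀ = 0 := by rw [hc₀def]; simp
    set d : ℂ → ℂ := fun k => (Complex.cos (k*ℓ)/Complex.sin (k*ℓ) - 1/(k*(ℓ:ℂ))) / ((ℓ:ℂ) * k)
      with hddef
    have hdlim : Tendsto d (𝓝[≠] (0:ℂ)) (𝓝 (-(1/3) : ℂ)) := by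
      have hmap : Tendsto (fun k : ℂ => k * (ℓ:ℂ)) (𝓝[≠] (0:ℂ)) (𝓝[≠] (0:ℂ)) := by
        rw [tendsto_nhdsWithin_iff]
        constructor
        · have h0 : Tendsto (fun k : ℂ => k * (ℓ:ℂ)) (𝓝 0) (𝓝 (0 * (ℓ:ℂ))) :=
            (continuous_id.mul continuous_const).tendsto 0
          simpa using h0.mono_left nhdsWithin_le_nhds
        · filter_upwards [self_mem_nhdsWithin] with k hk
          exact mul_ne_zero hk hl
      have h3 := (aux_cubic'.comp hmap).mul (aux_sin_div.comp hmap)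
      rw [show (-(1/3):ℂ) * 1 = -(1/3) by ring] at h3
      refine h3.congr' ?_
      have hev : ∀ᶠ k in 𝓝[≠] (0:ℂ), Complex.sin (k*(ℓ:ℂ)) ≠ 0 ∧ k ≠ 0 := by
        have hb : ∀ᶠ k in 𝓝 (0:ℂ), dist k (0:ℂ) < π/ℓ := by
          filter_upwards [Metric.ball_mem_nhds (0:ℂ) hπℓ] with k hk
          exact mem_ball.mp hk
        filter_upwards [hb.filter_mono nhdsWithin_le_nhds, self_mem_nhdsWithin] with k h1 h2
        refine ⟨(hpt k ?_ ?_).1, h2⟩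
        · rw [hc00]; exact h1
        · rw [hc00]; exact h2
      filter_upwards [hev] with k hk
      obtain ⟨hs, hk0⟩ := hk
      show _ = d k
      rw [hddef]
      simp only [Function.comp]
      field_simp
    set D : ℂ → ℂ := Function.update d 0 (-(1/3)) with hDdef
    have hDdiff : DifferentiableOn ℂ D (ball (0:ℂ) r') := by
      have hdd : DifferentiableOn ℂ d (ball (0:ℂ) r' \ {0}) := by
        intro k hk
        obtain ⟨hkb, hk0'⟩ := hk
        have hk0 : k ≠ 0 := by simpa using hk0'
        have hs : Complex.sin (k*(ℓ:ℂ)) ≠ 0 := by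
          refine (hpt k ?_ ?_).1
          · rw [hc00]; exact (mem_ball.mp hkb).trans hr'2
          · rw [hc00]; exact hk0
        apply DifferentiableAt.differentiableWithinAt
        have d1 : DifferentiableAt ℂ (fun k : ℂ => Complex.cos (k*(ℓ:ℂ))) k := by fun_prop
        have d2 : DifferentiableAt ℂ (fun k : ℂ => Complex.sin (k*(ℓ:ℂ))) k := by fun_prop
        have d3 : DifferentiableAt ℂ (fun k : ℂ => 1/(k*(ℓ:ℂ))) k :=
          (differentiableAt_const _).div (by fun_prop) (mul_ne_zero hk0 hl)
        exact ((d1.div d2 hs).sub d3).div (by fun_prop) (mul_ne_zero hl hk0)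
      have hbdd : (fun z => d z - d 0) =o[𝓝[≠] (0:ℂ)] fun z => (z - 0)⁻¹ := by
        apply Filter.IsBoundedUnder.isLittleO_sub_self_inv
        exact ((hdlim.sub_const (d 0)).norm.isBoundedUnder_le)
      have hupd := Complex.differentiableOn_update_limUnder_of_isLittleO
        (Metric.ball_mem_nhds (0:ℂ) hr'0) hdd hbdd
      rwa [hdlim.limUnder_eq] at hupd
    have hDint : (∮ k in C((0:ℂ), r), (k - 0)⁻¹ • D k) = (2 * (π:ℂ) * Complex.I) • D 0 :=
      DifferentiableOn.circleIntegral_sub_inv_smul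
        (hDdiff.mono (closedBall_subset_ball hr'1)) (mem_ball_self hr)
    have hD0 : D 0 = -(1/3) := Function.update_self _ _ _
    -- zpow part
    have hZcont : ContinuousOn (fun k : ℂ => ((ℓ:ℂ)^2)⁻¹ * (k - 0)^(-3:ℤ)) (sphere (0:ℂ) r) := by
      intro k hk
      obtain ⟨_, hk0, _⟩ := hsph k (by rw [hc00]; exact hk)
      refine (continuousAt_const.mul ?_).continuousWithinAt
      exact (continuousAt_id.sub continuousAt_const).zpow₀ _ (Or.inl (by simpa using hk0))
    have hZ : (∮ k in C((0:ℂ), r), (((ℓ:ℂ)^2)⁻¹ * (k - 0)^(-3:ℤ))) = 0 := by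
      rw [circleIntegral.integral_const_mul, circleIntegral.integral_sub_zpow_of_ne (by decide)]
      ring
    have hsub : sphere (0:ℂ) r ⊆ ball (0:ℂ) r' :=
      sphere_subset_closedBall.trans (closedBall_subset_ball hr'1)
    have hDcont : ContinuousOn (fun k : ℂ => (k - 0)⁻¹ • D k) (sphere (0:ℂ) r) := by
      intro k hk
      obtain ⟨_, hk0, _⟩ := hsph k (by rw [hc00]; exact hk)
      have hDk : ContinuousAt D k :=
        (hDdiff.differentiableAt (isOpen_ball.mem_nhds (hsub hk))).continuousAt
      exact (((continuousAt_id.sub continuousAt_const).inv₀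
        (by simpa using hk0)).smul hDk).continuousWithinAt
    have hGpval : (∮ k in C((0:ℂ), r), Gp k) = 2 * (π:ℂ) * Complex.I * (-(1/3)) := by
      have hEq : Set.EqOn Gp (fun k : ℂ => (k - 0)⁻¹ • D k
          - (-(((ℓ:ℂ)^2)⁻¹ * (k - 0)^(-3:ℤ)))) (sphere (0:ℂ) r) := by
        intro k hk
        obtain ⟨hs, hk0, _⟩ := hsph k (by rw [hc00]; exact hk)
        rw [hGpdef]
        simp only [sub_zero, smul_eq_mul, sub_neg_eq_add]
        rw [hDdef, Function.update_of_ne hk0, hddef]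
        rw [show (k:ℂ)^(-3:ℤ) = (k^3)⁻¹ by
          rw [zpow_neg, show ((3:ℤ)) = ((3:ℕ) : ℤ) by norm_num, zpow_natCast]]
        field_simp
        ring_nf
      rw [circleIntegral.integral_congr hr.le hEq,
        circleIntegral.integral_sub (g := fun k => -(((ℓ:ℂ)^2)⁻¹ * (k - 0)^(-3:ℤ))) (hDcont.circleIntegrable hr.le)
          ((hZcont.neg).circleIntegrable hr.le),
        hDint, hD0]
      have hneg : (∮ k in C((0:ℂ), r), -((((ℓ:ℂ)^2)⁻¹ * (k - 0)^(-3:ℤ)))) = 0 := by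
        have hfun : (fun k : ℂ => -((((ℓ:ℂ)^2)⁻¹ * (k - 0)^(-3:ℤ))))
            = fun k : ℂ => (-(((ℓ:ℂ)^2)⁻¹)) * (k - 0)^(-3:ℤ) := by
          funext k; ring
        rw [hfun, circleIntegral.integral_const_mul,
          circleIntegral.integral_sub_zpow_of_ne (by decide)]
        ring
      rw [hneg]
      simp [smul_eq_mul]
    rw [hsplit, hc00, hGpval]
    have h2πI : (2*(π:ℂ)*Complex.I) ≠ 0 := by
      simp [hπc, Complex.I_ne_zero]
    field_simp
  · rw [if_neg hn]
    have hn' : (n:ℂ) ≠ 0 := Int.cast_ne_zero.2 hn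
    have hc₀0 : c₀ ≠ 0 := by
      intro h
      rw [h, zero_mul] at hc₀ℓ
      exact (mul_ne_zero hn' hπc) hc₀ℓ.symm
    set e : ℂ → ℂ := fun k => (k - c₀) * Complex.cos (k*(ℓ:ℂ)) / Complex.sin (k*(ℓ:ℂ))
      / ((ℓ:ℂ) * k^2) with hedef
    have hA : Complex.cos (c₀*ℓ) * (ℓ:ℂ) ≠ 0 := mul_ne_zero hcos0 hl
    have helim : Tendsto e (𝓝[≠] c₀) (𝓝 (((ℓ:ℂ)^2 * c₀^2)⁻¹)) := by
      have hS : HasDerivAt (fun k : ℂ => Complex.sin (k*(ℓ:ℂ))) (Complex.cos (c₀*ℓ) * ℓ) c₀ := by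
        have := (Complex.hasDerivAt_sin (c₀*(ℓ:ℂ))).comp c₀ ((hasDerivAt_id c₀).mul_const (ℓ:ℂ))
        simpa [Function.comp_def] using this
      have h1 := hasDerivAt_iff_tendsto_slope.mp hS
      have h2 : Tendsto (fun k : ℂ => (k - c₀) / Complex.sin (k*(ℓ:ℂ))) (𝓝[≠] c₀)
          (𝓝 ((Complex.cos (c₀*ℓ) * ℓ)⁻¹)) := by
        have h3 := h1.inv₀ hA
        refine h3.congr (fun k => ?_)
        rw [slope_def_field, hsin0, sub_zero, inv_div]
      have h4 : Tendsto (fun k : ℂ => Complex.cos (k*(ℓ:ℂ)) / ((ℓ:ℂ) * k^2)) (𝓝[≠] c₀)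
          (𝓝 (Complex.cos (c₀*ℓ) / ((ℓ:ℂ) * c₀^2))) := by
        have hca : ContinuousAt (fun k : ℂ => Complex.cos (k*(ℓ:ℂ))) c₀ := by fun_prop
        have hcb : ContinuousAt (fun k : ℂ => (ℓ:ℂ) * k^2) c₀ := by fun_prop
        exact ((hca.div hcb (mul_ne_zero hl (pow_ne_zero 2 hc₀0))).tendsto).mono_left
          nhdsWithin_le_nhds
      have h5 := h2.mul h4
      have hval : (Complex.cos (c₀*ℓ) * (ℓ:ℂ))⁻¹ * (Complex.cos (c₀*ℓ) / ((ℓ:ℂ) * c₀^2))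
          = ((ℓ:ℂ)^2 * c₀^2)⁻¹ := by
        field_simp
      rw [hval] at h5
      refine h5.congr (fun k => ?_)
      rw [hedef]
      ring
    set E : ℂ → ℂ := Function.update e c₀ (((ℓ:ℂ)^2 * c₀^2)⁻¹) with hEdef
    have hEdiff : DifferentiableOn ℂ E (ball c₀ r') := by
      have hed : DifferentiableOn ℂ e (ball c₀ r' \ {c₀}) := by
        intro k hk
        obtain ⟨hkb, hk0'⟩ := hk
        have hkc : k ≠ c₀ := by simpa using hk0'
        obtain ⟨hs, hk0⟩ := hpt k ((mem_ball.mp hkb).trans hr'2) hkc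
        apply DifferentiableAt.differentiableWithinAt
        have d1 : DifferentiableAt ℂ (fun k : ℂ => (k - c₀) * Complex.cos (k*(ℓ:ℂ))) k := by
          fun_prop
        have d2 : DifferentiableAt ℂ (fun k : ℂ => Complex.sin (k*(ℓ:ℂ))) k := by fun_prop
        have d3 : DifferentiableAt ℂ (fun k : ℂ => (ℓ:ℂ) * k^2) k := by fun_prop
        exact (d1.div d2 hs).div d3 (mul_ne_zero hl (pow_ne_zero 2 hk0))
      have hbdd : (fun z => e z - e c₀) =o[𝓝[≠] c₀] fun z => (z - c₀)⁻¹ :=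
        Filter.IsBoundedUnder.isLittleO_sub_self_inv
          ((helim.sub_const (e c₀)).norm.isBoundedUnder_le)
      have hupd := Complex.differentiableOn_update_limUnder_of_isLittleO
        (Metric.ball_mem_nhds c₀ hr'0) hed hbdd
      rwa [helim.limUnder_eq] at hupd
    have hEint : (∮ k in C(c₀, r), (k - c₀)⁻¹ • E k) = (2 * (π:ℂ) * Complex.I) • E c₀ :=
      DifferentiableOn.circleIntegral_sub_inv_smul
        (hEdiff.mono (closedBall_subset_ball hr'1)) (mem_ball_self hr)
    have hEc : E c₀ = ((ℓ:ℂ)^2 * c₀^2)⁻¹ := Function.update_self _ _ _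
    have hGpval : (∮ k in C(c₀, r), Gp k)
        = (2 * (π:ℂ) * Complex.I) * ((ℓ:ℂ)^2 * c₀^2)⁻¹ := by
      have hEq : Set.EqOn Gp (fun k : ℂ => (k - c₀)⁻¹ • E k) (sphere c₀ r) := by
        intro k hk
        obtain ⟨hs, hk0, hkc⟩ := hsph k hk
        rw [hGpdef]
        simp only [smul_eq_mul]
        rw [hEdef, Function.update_of_ne hkc, hedef]
        have hsub : k - c₀ ≠ 0 := sub_ne_zero.2 hkc
        field_simp
      rw [circleIntegral.integral_congr hr.le hEq, hEint, hEc, smul_eq_mul]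
    rw [hsplit, hGpval]
    have hfin : (ℓ:ℂ)^2 * c₀^2 = (n:ℂ)^2 * (π:ℂ)^2 := by
      linear_combination (c₀ * (ℓ:ℂ) + (n:ℂ) * (π:ℂ)) * hc₀ℓ
    rw [hfin]
    have h2πI : (2*(π:ℂ)*Complex.I) ≠ 0 := by simp [hπc, Complex.I_ne_zero]
    field_simp

end Aux
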